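/- arXiv:1902.00494 — 2 statements merged into one kernel-verified Lean document; each statement's English description precedes it below -/
import Mathlib

section
/- Let $(\Omega_1, \mathcal{F}_1, \mathbb{P}_1)$ and $(\Omega_2, \mathcal{F}_2, \mathbb{P}_2)$ be probability spaces and $(\Omega, \mathcal{F}, \mathbb{P})$ their product. Suppose $(\Omega_2, \mathcal{F}_2, \mathbb{P}_2)$ admits a measurable $F : \Omega_2 \to \mathbb{R}$ such that $F_*\mathbb{P}_2$ has a Lebesgue density and $\mathbb{P}_2$ admits a disintegration with respect to $F_*\mathbb{P}_2$. If $\Gamma \in \mathcal{F}$ satisfies $\mathbb{E}(\mathbf{1}_\Gamma \mid \mathcal{F}_1) \ge p$ $\mathbb{P}$-almost surely for some $p \in (0,1)$, then there exists $\Gamma' \in \mathcal{F}$ with $\Gamma' \subset \Gamma$ and $\mathbb{E}(\mathbf{1}_{\Gamma'} \mid \mathcal{F}_1) = p$ $\mathbb{P}$-almost surely. -/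
open MeasureTheory Set
open scoped ENNReal

lemma key_lemma (ν : Measure ℝ) [IsFiniteMeasure ν]
    (hsing : ∀ s : ℝ, ν ({s} : Set ℝ) = 0)
    (p' : ℝ≥0∞) (hp0 : p' ≠ 0) (hple : p' ≤ ν Set.univ) :
    MeasurableSet {s : ℝ | ν (Set.Iic s) ≤ p'} ∧
      ν {s : ℝ | ν (Set.Iic s) ≤ p'} = p' := by
  set g : ℝ → ℝ≥0∞ := fun s => ν (Iic s) with hg
  have gmono : Monotone g := fun a b h => measure_mono (Iic_subset_Iic.2 h)
  by_cases hex : ∃ t, p' < g t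
  · obtain ⟨t₁, ht₁⟩ := hex
    set S := {s : ℝ | g s ≤ p'} with hS
    -- S nonempty
    have hiInf : ν (⋂ n : ℕ, Iic (-(n:ℝ))) = ⨅ n : ℕ, g (-(n:ℝ)) := by
      refine Antitone.measure_iInter (fun a b hab => ?_) (fun n => measurableSet_Iic.nullMeasurableSet) ⟨0, measure_ne_top _ _⟩
      exact Iic_subset_Iic.2 (by exact_mod_cast neg_le_neg (Nat.cast_le.2 hab))
    have hempty : (⋂ n : ℕ, Iic (-(n:ℝ))) = ∅ := by
      ext x; simp only [mem_iInter, mem_Iic, mem_empty_iff_false, iff_false, not_forall, not_le]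
      obtain ⟨n, hn⟩ := exists_nat_gt (-x)
      exact ⟨n, by linarith⟩
    have hinf0 : (⨅ n : ℕ, g (-(n:ℝ))) = 0 := by rw [← hiInf, hempty, measure_empty]
    have hne : S.Nonempty := by
      have : (⨅ n : ℕ, g (-(n:ℝ))) < p' := by rw [hinf0]; exact pos_iff_ne_zero.2 hp0
      obtain ⟨n, hn⟩ := iInf_lt_iff.mp this
      exact ⟨-(n:ℝ), hn.le⟩
    have hbdd : BddAbove S := by
      refine ⟨t₁, fun s hs => ?_⟩
      by_contra h
      push_neg at h
      have h2 : g t₁ ≤ g s := gmono h.le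
      exact absurd (lt_of_lt_of_le ht₁ (h2.trans hs)) (lt_irrefl _)
    set t₀ := sSup S with ht₀
    have hlt : ∀ x < t₀, g x ≤ p' := by
      intro x hx
      obtain ⟨s, hsS, hxs⟩ := exists_lt_of_lt_csSup hne hx
      exact le_trans (gmono hxs.le) hsS
    -- g t₀ ≤ p'
    have hIio : Iio t₀ = ⋃ n : ℕ, Iic (t₀ - 1/(n+1)) := by
      ext x
      simp only [mem_Iio, mem_iUnion, mem_Iic]
      constructor
      · intro hx
        obtain ⟨n, hn⟩ := exists_nat_one_div_lt (sub_pos.2 hx)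
        exact ⟨n, by linarith⟩
      · rintro ⟨n, hn⟩
        have : (0:ℝ) < 1/(n+1) := by positivity
        linarith
    have hIio_le : ν (Iio t₀) ≤ p' := by
      rw [hIio, Monotone.measure_iUnion]
      · refine iSup_le fun n => hlt _ ?_
        have : (0:ℝ) < 1/(n+1) := by positivity
        linarith
      · intro a b hab
        refine Iic_subset_Iic.2 ?_
        have : (1:ℝ)/(b+1) ≤ 1/(a+1) := by
          apply one_div_le_one_div_of_le (by positivity)
          exact_mod_cast by exact_mod_cast add_le_add_left (Nat.cast_le.2 hab) 1
        linarith
    have ht₀S : g t₀ ≤ p' := by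
      have : ν (Iic t₀) ≤ ν (Iio t₀) + ν {t₀} := by
        rw [← Iio_union_right]; exact measure_union_le _ _
      rw [hsing t₀, add_zero] at this
      exact this.trans hIio_le
    have hSeq : S = Iic t₀ := by
      ext s
      constructor
      · intro hs; exact le_csSup hbdd hs
      · intro hs; exact le_trans (gmono hs) ht₀S
    have hge : p' ≤ g t₀ := by
      have hIic : Iic t₀ = ⋂ n : ℕ, Iic (t₀ + 1/(n+1)) := by
        ext x
        simp only [mem_Iic, mem_iInter]
        constructor
        · intro hx n
          have : (0:ℝ) < 1/(n+1) := by positivity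
          linarith
        · intro hx
          by_contra h
          push_neg at h
          obtain ⟨n, hn⟩ := exists_nat_one_div_lt (sub_pos.2 h)
          have := hx n
          linarith
      have : ν (Iic t₀) = ⨅ n : ℕ, g (t₀ + 1/(n+1)) := by
        rw [hIic]
        refine Antitone.measure_iInter (fun a b hab => Iic_subset_Iic.2 ?_) (fun n => measurableSet_Iic.nullMeasurableSet) ⟨0, measure_ne_top _ _⟩
        have : (1:ℝ)/(b+1) ≤ 1/(a+1) := by
          apply one_div_le_one_div_of_le (by positivity)
          exact_mod_cast add_le_add_left (Nat.cast_le.2 hab) 1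
        linarith
      show p' ≤ ν (Iic t₀)
      rw [this]
      refine le_iInf fun n => ?_
      by_contra h
      push_neg at h
      have hmem : t₀ + 1/(n+1) ∈ S := h.le
      have := le_csSup hbdd hmem
      have hpos : (0:ℝ) < 1/(n+1) := by positivity
      linarith
    have hgt₀ : g t₀ = p' := le_antisymm ht₀S hge
    refine ⟨?_, ?_⟩
    · show MeasurableSet S
      rw [hSeq]; exact measurableSet_Iic
    · show ν S = p'
      rw [hSeq]; exact hgt₀
  · push_neg at hex
    have hSuniv : {s : ℝ | g s ≤ p'} = univ := eq_univ_of_forall fun s => hex s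
    have huniv : ν univ ≤ p' := by
      have : (univ : Set ℝ) = ⋃ n : ℕ, Iic (n:ℝ) := by
        ext x; simp only [mem_univ, mem_iUnion, mem_Iic, true_iff]
        obtain ⟨n, hn⟩ := exists_nat_gt x
        exact ⟨n, hn.le⟩
      rw [this, Monotone.measure_iUnion (fun a b hab => Iic_subset_Iic.2 (Nat.cast_le.2 hab))]
      exact iSup_le fun n => hex _
    exact ⟨by rw [hSuniv]; exact MeasurableSet.univ, by rw [hSuniv]; exact le_antisymm huniv hple⟩

/-- On a product probability space whose second factor carries a function `F`
with absolutely continuous law and a disintegration, any event `Γ` with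
`𝔼(1_Γ | 𝓕₁) ≥ p` a.s. contains an event `Γ'` with `𝔼(1_{Γ'} | 𝓕₁) = p` a.s. -/
theorem stmt12
    {Ω₁ Ω₂ : Type*} [MeasurableSpace Ω₁] [MeasurableSpace Ω₂]
    (μ₁ : Measure Ω₁) (μ₂ : Measure Ω₂)
    [IsProbabilityMeasure μ₁] [IsProbabilityMeasure μ₂]
    (F : Ω₂ → ℝ) (hF : Measurable F)
    (ρ : ℝ → ℝ≥0∞) (hρ : Measurable ρ)
    (hdens : Measure.map F μ₂ = (volume : Measure ℝ).withDensity ρ)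
    (P : ℝ → Measure Ω₂)
    (hPprob : ∀ s, IsProbabilityMeasure (P s))
    (hPmeas : ∀ A : Set Ω₂, MeasurableSet A → Measurable fun s => P s A)
    (hdisint : ∀ (A : Set Ω₂) (B : Set ℝ), MeasurableSet A → MeasurableSet B →
      μ₂ (A ∩ F ⁻¹' B) = ∫⁻ s in B, P s A ∂(Measure.map F μ₂))
    (Γ : Set (Ω₁ × Ω₂)) (hΓ : MeasurableSet Γ)
    (p : ℝ) (hp : p ∈ Set.Ioo (0 : ℝ) 1)
    (hge : ∀ᵐ ω ∂(μ₁.prod μ₂),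
      p ≤ ((μ₁.prod μ₂)[Set.indicator Γ (fun _ => (1 : ℝ)) |
        MeasurableSpace.comap Prod.fst inferInstance]) ω) :
    ∃ Γ' : Set (Ω₁ × Ω₂), MeasurableSet Γ' ∧ Γ' ⊆ Γ ∧
      ((μ₁.prod μ₂)[Set.indicator Γ' (fun _ => (1 : ℝ)) |
        MeasurableSpace.comap Prod.fst inferInstance])
        =ᵐ[μ₁.prod μ₂] fun _ => p := by
  classical
  set μ := μ₁.prod μ₂ with hμdef
  have hm : MeasurableSpace.comap (Prod.fst : Ω₁ × Ω₂ → Ω₁) inferInstance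
      ≤ (inferInstance : MeasurableSpace (Ω₁ × Ω₂)) := measurable_fst.comap_le
  haveI : SigmaFinite (μ.trim hm) := inferInstance
  set p' : ℝ≥0∞ := ENNReal.ofReal p with hp'def
  have hp'0 : p' ≠ 0 := (ENNReal.ofReal_pos.2 hp.1).ne'
  set f : Ω₁ → ℝ≥0∞ := fun ω₁ => μ₂ (Prod.mk ω₁ ⁻¹' Γ) with hfdef
  have hfmeas : Measurable f := measurable_measure_prodMk_left hΓ
  have hfst : ∀ B : Set Ω₁, (Prod.fst ⁻¹' B : Set (Ω₁ × Ω₂)) = B ×ˢ univ := by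
    intro B; ext x; simp [Set.mem_prod]
  have hμfst : ∀ B : Set Ω₁, MeasurableSet B → μ (Prod.fst ⁻¹' B) = μ₁ B := by
    intro B hB
    rw [hfst B, hμdef, Measure.prod_prod, measure_univ, mul_one]
  -- the integral of an indicator over a cylinder
  have hindint : ∀ (D : Set (Ω₁ × Ω₂)), MeasurableSet D → ∀ (B : Set Ω₁), MeasurableSet B →
      ∫ x in Prod.fst ⁻¹' B, Set.indicator D (fun _ => (1:ℝ)) x ∂μ
        = (∫⁻ ω₁ in B, μ₂ (Prod.mk ω₁ ⁻¹' D) ∂μ₁).toReal := by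
    intro D hD B hB
    rw [setIntegral_indicator hD, setIntegral_const, smul_eq_mul, mul_one]
    congr 1
    rw [measureReal_def, hfst B, hμdef, Measure.prod_apply ((hB.prod MeasurableSet.univ).inter hD)]
    rw [← lintegral_indicator hB]
    refine congrArg ENNReal.toReal (lintegral_congr fun ω₁ => ?_)
    by_cases h : ω₁ ∈ B
    · rw [Set.indicator_of_mem h]
      congr 1
      ext ω₂
      simp [h]
    · rw [Set.indicator_of_notMem h]
      have : Prod.mk ω₁ ⁻¹' (B ×ˢ univ ∩ D) = ∅ := by
        ext ω₂; simp [h]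
      rw [this, measure_empty]
  have hint : Integrable (Set.indicator Γ fun _ => (1:ℝ)) μ :=
    (integrable_const (1:ℝ)).indicator hΓ
  -- a.e. lower bound on the section measure
  have hae : ∀ᵐ ω₁ ∂μ₁, p' ≤ f ω₁ := by
    refine ae_le_of_forall_setLIntegral_le_of_sigmaFinite measurable_const
      (fun B hB _ => ?_)
    rw [setLIntegral_const]
    have hBm : MeasurableSet[MeasurableSpace.comap (Prod.fst : Ω₁ × Ω₂ → Ω₁) inferInstance] ((Prod.fst : Ω₁ × Ω₂ → Ω₁) ⁻¹' B) := ⟨B, hB, rfl⟩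
    have h1 : ∫ x in Prod.fst ⁻¹' B, (fun _ => p) x ∂μ
        ≤ ∫ x in Prod.fst ⁻¹' B, (μ[Set.indicator Γ (fun _ => (1:ℝ))|MeasurableSpace.comap Prod.fst inferInstance]) x ∂μ :=
      setIntegral_mono_ae (integrable_const p).integrableOn
        integrable_condExp.integrableOn hge
    rw [setIntegral_condExp hm hint hBm, hindint Γ hΓ B hB, setIntegral_const,
      measureReal_def, hμfst B hB, smul_eq_mul] at h1
    have hfin : ∫⁻ ω₁ in B, f ω₁ ∂μ₁ ≠ ⊤ := by
      refine ne_top_of_le_ne_top (measure_ne_top μ₁ B) ?_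
      calc ∫⁻ ω₁ in B, f ω₁ ∂μ₁ ≤ ∫⁻ _ in B, (1:ℝ≥0∞) ∂μ₁ :=
            lintegral_mono fun ω₁ => prob_le_one
        _ = μ₁ B := by rw [setLIntegral_const, one_mul]
    rw [← ENNReal.toReal_le_toReal (by finiteness) hfin, ENNReal.toReal_mul,
      hp'def, ENNReal.toReal_ofReal hp.1.le]
    linarith [h1]
  -- joint measurability of the truncated section measure
  set Gm : Set ((Ω₁ × ℝ) × Ω₂) :=
    ((fun q : (Ω₁ × ℝ) × Ω₂ => (q.1.1, q.2)) ⁻¹' Γ) ∩ {q | F q.2 ≤ q.1.2} with hGmdef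
  have hGmmeas : MeasurableSet Gm := by
    refine MeasurableSet.inter (hΓ.preimage (measurable_fst.fst.prodMk measurable_snd)) ?_
    exact measurableSet_le (hF.comp measurable_snd) measurable_fst.snd
  set G : Ω₁ × ℝ → ℝ≥0∞ := fun z => μ₂ (Prod.mk z ⁻¹' Gm) with hGdef
  have hGmeas : Measurable G := measurable_measure_prodMk_left hGmmeas
  have hGsec : ∀ (ω₁ : Ω₁) (s : ℝ),
      G (ω₁, s) = μ₂ (Prod.mk ω₁ ⁻¹' Γ ∩ F ⁻¹' Iic s) := by
    intro ω₁ s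
    refine congrArg μ₂ ?_
    ext ω₂
    simp [hGmdef, Set.mem_preimage, Set.mem_Iic]
  -- the subset
  set Γ' : Set (Ω₁ × Ω₂) := Γ ∩ {x | G (x.1, F x.2) ≤ p'} with hΓ'def
  have hΓ'meas : MeasurableSet Γ' := by
    refine hΓ.inter (measurableSet_le ?_ measurable_const)
    exact hGmeas.comp (measurable_fst.prodMk (hF.comp measurable_snd))
  -- pointwise section measure
  have hsec : ∀ ω₁ : Ω₁, p' ≤ f ω₁ → μ₂ (Prod.mk ω₁ ⁻¹' Γ') = p' := by
    intro ω₁ hω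
    set A := Prod.mk ω₁ ⁻¹' Γ with hA
    have hAmeas : MeasurableSet A := measurable_prodMk_left hΓ
    set ν : Measure ℝ := Measure.map F (μ₂.restrict A) with hν
    haveI : IsFiniteMeasure ν := by
      constructor
      rw [hν, Measure.map_apply hF MeasurableSet.univ]
      exact lt_of_le_of_lt (measure_mono (Set.subset_univ _))
        (lt_of_le_of_lt (Measure.restrict_le_self _) (measure_lt_top μ₂ univ))
    have hsing : ∀ s : ℝ, ν ({s} : Set ℝ) = 0 := by
      intro s
      rw [hν, Measure.map_apply hF (measurableSet_singleton s),
        Measure.restrict_apply (hF (measurableSet_singleton s))]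
      refine le_antisymm ?_ zero_le
      calc μ₂ (F ⁻¹' {s} ∩ A) ≤ μ₂ (F ⁻¹' {s}) := measure_mono Set.inter_subset_left
        _ = Measure.map F μ₂ {s} := (Measure.map_apply hF (measurableSet_singleton s)).symm
        _ = 0 := by
            rw [hdens, withDensity_apply _ (measurableSet_singleton s),
              Measure.restrict_eq_zero.2 (Real.volume_singleton), lintegral_zero_measure]
    have hIic : ∀ s : ℝ, ν (Iic s) = G (ω₁, s) := by
      intro s
      rw [hν, Measure.map_apply hF measurableSet_Iic,
        Measure.restrict_apply (hF measurableSet_Iic), hGsec, Set.inter_comm]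
    have hple : p' ≤ ν univ := by
      rw [hν, Measure.map_apply hF MeasurableSet.univ, Set.preimage_univ,
        Measure.restrict_apply_univ]
      exact hω
    obtain ⟨hSmeas, hSval⟩ := key_lemma ν hsing p' hp'0 hple
    have hsec_eq : Prod.mk ω₁ ⁻¹' Γ' = A ∩ F ⁻¹' {s | ν (Iic s) ≤ p'} := by
      ext ω₂
      simp only [hΓ'def, Set.mem_preimage, Set.mem_inter_iff, Set.mem_setOf_eq, hA]
      rw [hIic (F ω₂)]
    rw [hsec_eq, Set.inter_comm, ← Measure.restrict_apply (hF hSmeas),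
      ← Measure.map_apply hF hSmeas, ← hν, hSval]
  have hsec_ae : ∀ᵐ ω₁ ∂μ₁, μ₂ (Prod.mk ω₁ ⁻¹' Γ') = p' := hae.mono fun ω₁ h => hsec ω₁ h
  refine ⟨Γ', hΓ'meas, Set.inter_subset_left, ?_⟩
  have hint' : Integrable (Set.indicator Γ' fun _ => (1:ℝ)) μ :=
    (integrable_const (1:ℝ)).indicator hΓ'meas
  refine (ae_eq_condExp_of_forall_setIntegral_eq hm hint'
    (fun s _ _ => (integrable_const p).integrableOn) ?_ ?_).symm
  · rintro s ⟨B, hB, rfl⟩ _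
    rw [hindint Γ' hΓ'meas B hB, setIntegral_const, measureReal_def, hμfst B hB, smul_eq_mul]
    have : ∫⁻ ω₁ in B, μ₂ (Prod.mk ω₁ ⁻¹' Γ') ∂μ₁ = p' * μ₁ B := by
      rw [lintegral_congr_ae (ae_restrict_of_ae (hsec_ae.mono fun ω₁ h => h)),
        setLIntegral_const]
    rw [this, ENNReal.toReal_mul, hp'def, ENNReal.toReal_ofReal hp.1.le, mul_comm]
  · exact StronglyMeasurable.aestronglyMeasurable
      (stronglyMeasurable_const : StronglyMeasurable[MeasurableSpace.comap Prod.fst inferInstance] fun _ => p)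
end

section
/- Let $\mathcal{I} \subset \mathbb{Z}^3$ be a finite symmetric set ($-\mathcal{I} = \mathcal{I}$) containing the origin, and let $\mathcal{H}(\mathcal{I}) = \mathrm{span}\{e_l : l \in \mathcal{I}\}$ in $L^2(\mathbb{T}^3)$, where $\{e_l\}$ is the real trigonometric basis. Define $\mathcal{H}_0 = \mathcal{H}(\mathcal{I})$ and $\mathcal{H}_{k+1} = \mathrm{span}\{\eta, \zeta\xi : \eta, \zeta \in \mathcal{H}_k, \xi \in \mathcal{H}(\mathcal{I})\}$. If $\mathcal{I}$ generates $\mathbb{Z}^3$ as a group, then $\bigcup_{k \ge 0} \mathcal{H}_k$ is dense in $L^2(\mathbb{T}^3)$; conversely, if $\mathcal{I}$ does not generate $\mathbb{Z}^3$, then $\bigcup_{k \ge 0} \mathcal{H}_k$ is not dense in $L^2(\mathbb{T}^3)$. -/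
open MeasureTheory
open scoped ENNReal ComplexConjugate

noncomputable section

local instance : Fact (0 < 2 * Real.pi) := ⟨by positivity⟩

/-- The three-dimensional torus `𝕋³`. -/
abbrev Torus3 := Fin 3 → AddCircle (2 * Real.pi)

/-- `c_l(x) = cos⟨l, x⟩` on the torus, realised as the real part of `exp(i⟨l,x⟩)`. -/
def cmode3 (l : Fin 3 → ℤ) (x : Torus3) : ℝ := (∏ i, fourier (l i) (x i)).re

/-- `s_l(x) = sin⟨l, x⟩` on the torus, realised as the imaginary part of `exp(i⟨l,x⟩)`. -/
def smode3 (l : Fin 3 → ℤ) (x : Torus3) : ℝ := (∏ i, fourier (l i) (x i)).im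

/-- The sign convention for the real trigonometric basis: cosine when the first nonzero
coordinate of `l` is positive (or `l = 0`), sine otherwise. -/
def isCosMode (l : Fin 3 → ℤ) : Prop :=
  0 < l 0 ∨ (l 0 = 0 ∧ 0 < l 1) ∨ (l 0 = 0 ∧ l 1 = 0 ∧ 0 ≤ l 2)

open Classical in
/-- The real trigonometric basis function `e_l`. -/
def emode3 (l : Fin 3 → ℤ) : Torus3 → ℝ :=
  if isCosMode l then cmode3 l else smode3 l

/-- The subspace `𝓗(𝓘) = span{e_l : l ∈ 𝓘}` of functions on the torus. -/
def Hspace (I : Set (Fin 3 → ℤ)) : Submodule ℝ (Torus3 → ℝ) :=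
  Submodule.span ℝ (emode3 '' I)

/-- The saturation hierarchy: `𝓗₀ = 𝓗(𝓘)`,
`𝓗_{k+1} = span{η, ζ·ξ : η, ζ ∈ 𝓗_k, ξ ∈ 𝓗(𝓘)}`. -/
def Hseq (I : Set (Fin 3 → ℤ)) : ℕ → Submodule ℝ (Torus3 → ℝ)
  | 0 => Hspace I
  | k + 1 => Submodule.span ℝ
      ({f | f ∈ Hseq I k} ∪
        {g | ∃ ζ ∈ Hseq I k, ∃ ξ ∈ Hspace I, g = fun x => ζ x * ξ x})

namespace Stmt15Aux

def Fm (l : Fin 3 → ℤ) (x : Torus3) : ℂ := ∏ i, fourier (l i) (x i)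

lemma Fm_add (l m : Fin 3 → ℤ) (x : Torus3) : Fm (l + m) x = Fm l x * Fm m x := by
  simp only [Fm, Pi.add_apply, fourier_add, Finset.prod_mul_distrib]

lemma Fm_neg (l : Fin 3 → ℤ) (x : Torus3) : Fm (-l) x = conj (Fm l x) := by
  simp only [Fm, Pi.neg_apply, fourier_neg, map_prod]

lemma Fm_zero (x : Torus3) : Fm 0 x = 1 := by
  simp [Fm, fourier_zero]

lemma Fm_sub (l m : Fin 3 → ℤ) (x : Torus3) : Fm (l - m) x = Fm l x * conj (Fm m x) := by
  rw [sub_eq_add_neg, Fm_add, Fm_neg]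

lemma continuous_Fm (l : Fin 3 → ℤ) : Continuous (Fm l) := by
  apply continuous_finset_prod
  exact fun i _ => (map_continuous (fourier (l i))).comp (continuous_apply i)

lemma cmode3_eq (l : Fin 3 → ℤ) (x : Torus3) : cmode3 l x = (Fm l x).re := rfl
lemma smode3_eq (l : Fin 3 → ℤ) (x : Torus3) : smode3 l x = (Fm l x).im := rfl

lemma continuous_cmode3 (l : Fin 3 → ℤ) : Continuous (cmode3 l) :=
  Complex.continuous_re.comp (continuous_Fm l)
lemma continuous_smode3 (l : Fin 3 → ℤ) : Continuous (smode3 l) :=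
  Complex.continuous_im.comp (continuous_Fm l)
lemma continuous_emode3 (l : Fin 3 → ℤ) : Continuous (emode3 l) := by
  unfold emode3; split
  · exact continuous_cmode3 l
  · exact continuous_smode3 l

lemma ne_zero_iff (l : Fin 3 → ℤ) : l ≠ 0 ↔ ¬(l 0 = 0 ∧ l 1 = 0 ∧ l 2 = 0) := by
  constructor
  · intro h hc
    exact h (funext fun i => by fin_cases i <;> simp [hc.1, hc.2.1, hc.2.2])
  · intro h hc
    exact h (by simp [hc])

lemma isCosMode_zero : isCosMode 0 := by simp [isCosMode]

lemma isCosMode_or (l : Fin 3 → ℤ) : isCosMode l ∨ isCosMode (-l) := by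
  simp only [isCosMode, Pi.neg_apply]; omega

lemma isCosMode_both {l : Fin 3 → ℤ} (h1 : isCosMode l) (h2 : isCosMode (-l)) : l = 0 := by
  by_contra hne
  rw [← ne_eq, ne_zero_iff] at hne
  simp only [isCosMode, Pi.neg_apply] at h1 h2
  omega

lemma cmode3_neg (l : Fin 3 → ℤ) : cmode3 (-l) = cmode3 l := by
  funext x; rw [cmode3_eq, cmode3_eq, Fm_neg, Complex.conj_re]

lemma smode3_neg (l : Fin 3 → ℤ) : smode3 (-l) = fun x => - smode3 l x := by
  funext x; rw [smode3_eq, Fm_neg, Complex.conj_im, smode3_eq]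

lemma smode3_zero : smode3 0 = fun _ => (0:ℝ) := by
  funext x; rw [smode3_eq, Fm_zero]; simp

lemma cmode3_zero : cmode3 0 = fun _ => (1:ℝ) := by
  funext x; rw [cmode3_eq, Fm_zero]; simp


section Products
variable (l m : Fin 3 → ℤ)

lemma c_mul_c : (fun x => cmode3 l x * cmode3 m x)
    = (1/2 : ℝ) • cmode3 (l + m) + (1/2 : ℝ) • cmode3 (l - m) := by
  funext x
  simp only [Pi.add_apply, Pi.smul_apply, smul_eq_mul, cmode3_eq, Fm_add, Fm_sub,
    Complex.mul_re, Complex.conj_re, Complex.conj_im]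
  ring

lemma s_mul_s : (fun x => smode3 l x * smode3 m x)
    = (1/2 : ℝ) • cmode3 (l - m) - (1/2 : ℝ) • cmode3 (l + m) := by
  funext x
  simp only [Pi.sub_apply, Pi.smul_apply, smul_eq_mul, cmode3_eq, smode3_eq, Fm_add, Fm_sub,
    Complex.mul_re, Complex.conj_re, Complex.conj_im]
  ring

lemma c_mul_s : (fun x => cmode3 l x * smode3 m x)
    = (1/2 : ℝ) • smode3 (l + m) - (1/2 : ℝ) • smode3 (l - m) := by
  funext x
  simp only [Pi.sub_apply, Pi.smul_apply, smul_eq_mul, cmode3_eq, smode3_eq, Fm_add, Fm_sub,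
    Complex.mul_im, Complex.conj_re, Complex.conj_im]
  ring

lemma s_mul_c : (fun x => smode3 l x * cmode3 m x)
    = (1/2 : ℝ) • smode3 (l + m) + (1/2 : ℝ) • smode3 (l - m) := by
  funext x
  simp only [Pi.add_apply, Pi.smul_apply, smul_eq_mul, cmode3_eq, smode3_eq, Fm_add, Fm_sub,
    Complex.mul_im, Complex.conj_re, Complex.conj_im]
  ring

end Products

section SpanLemmas

/-- `cmode3 l` and `smode3 l` lie in the span of the `emode3` over a symmetric set. -/
lemma cs_mem {G : Set (Fin 3 → ℤ)} (hG : ∀ l ∈ G, -l ∈ G) {l : Fin 3 → ℤ} (hl : l ∈ G) :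
    cmode3 l ∈ Submodule.span ℝ (emode3 '' G) ∧
      smode3 l ∈ Submodule.span ℝ (emode3 '' G) := by
  classical
  have hmem : emode3 l ∈ Submodule.span ℝ (emode3 '' G) :=
    Submodule.subset_span ⟨l, hl, rfl⟩
  have hmem' : emode3 (-l) ∈ Submodule.span ℝ (emode3 '' G) :=
    Submodule.subset_span ⟨-l, hG l hl, rfl⟩
  by_cases h0 : l = 0
  · subst h0
    constructor
    · have : emode3 0 = cmode3 0 := if_pos isCosMode_zero
      rwa [← this]
    · rw [smode3_zero]
      exact Submodule.zero_mem _
  by_cases hc : isCosMode l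
  · have hnc : ¬ isCosMode (-l) := fun h => h0 (isCosMode_both hc h)
    have e1 : emode3 l = cmode3 l := if_pos hc
    have e2 : emode3 (-l) = smode3 (-l) := if_neg hnc
    constructor
    · rwa [← e1]
    · have : smode3 l = (-1 : ℝ) • emode3 (-l) := by
        rw [e2, smode3_neg]; funext x; simp
      rw [this]
      exact Submodule.smul_mem _ _ hmem'
  · have hc' : isCosMode (-l) := (isCosMode_or l).resolve_left hc
    have e1 : emode3 l = smode3 l := if_neg hc
    have e2 : emode3 (-l) = cmode3 (-l) := if_pos hc'
    constructor
    · have : cmode3 l = emode3 (-l) := by rw [e2, cmode3_neg]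
      rw [this]; exact hmem'
    · rwa [← e1]

/-- Product of two basis functions indexed in a subgroup stays in the span. -/
lemma emul_mem {G : AddSubgroup (Fin 3 → ℤ)} {l m : Fin 3 → ℤ}
    (hl : l ∈ G) (hm : m ∈ G) :
    (fun x => emode3 l x * emode3 m x) ∈ Submodule.span ℝ (emode3 '' (G : Set (Fin 3 → ℤ))) := by
  classical
  have hGs : ∀ r ∈ (G : Set (Fin 3 → ℤ)), -r ∈ (G : Set (Fin 3 → ℤ)) := fun r hr => G.neg_mem hr
  have hadd := cs_mem hGs (G.add_mem hl hm)
  have hsub := cs_mem hGs (G.add_mem hl (G.neg_mem hm) : l + -m ∈ G)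
  rw [← sub_eq_add_neg] at hsub
  unfold emode3
  split <;> split
  · rw [c_mul_c]
    exact Submodule.add_mem _ (Submodule.smul_mem _ _ hadd.1) (Submodule.smul_mem _ _ hsub.1)
  · rw [c_mul_s]
    exact Submodule.sub_mem _ (Submodule.smul_mem _ _ hadd.2) (Submodule.smul_mem _ _ hsub.2)
  · rw [s_mul_c]
    exact Submodule.add_mem _ (Submodule.smul_mem _ _ hadd.2) (Submodule.smul_mem _ _ hsub.2)
  · rw [s_mul_s]
    exact Submodule.sub_mem _ (Submodule.smul_mem _ _ hsub.1) (Submodule.smul_mem _ _ hadd.1)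

/-- The span over a subgroup is closed under pointwise multiplication. -/
lemma span_mul_mem {G : AddSubgroup (Fin 3 → ℤ)} {f g : Torus3 → ℝ}
    (hf : f ∈ Submodule.span ℝ (emode3 '' (G : Set (Fin 3 → ℤ))))
    (hg : g ∈ Submodule.span ℝ (emode3 '' (G : Set (Fin 3 → ℤ)))) :
    (fun x => f x * g x) ∈ Submodule.span ℝ (emode3 '' (G : Set (Fin 3 → ℤ))) := by
  induction hf using Submodule.span_induction with
  | mem f hfmem =>
    obtain ⟨l, hl, rfl⟩ := hfmem
    induction hg using Submodule.span_induction with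
    | mem g hgmem =>
      obtain ⟨r, hr, rfl⟩ := hgmem
      exact emul_mem hl hr
    | zero =>
      have : (fun x => emode3 l x * (0 : Torus3 → ℝ) x) = (0 : Torus3 → ℝ) := by
        funext x; simp
      rw [this]; exact Submodule.zero_mem _
    | add g₁ g₂ hg₁ hg₂ ih₁ ih₂ =>
      have : (fun x => emode3 l x * (g₁ + g₂) x)
          = (fun x => emode3 l x * g₁ x) + fun x => emode3 l x * g₂ x := by
        funext x; simp [mul_add]
      rw [this]; exact Submodule.add_mem _ ih₁ ih₂
    | smul a g hgm ih =>
      have : (fun x => emode3 l x * (a • g) x) = a • fun x => emode3 l x * g x := by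
        funext x; simp [Pi.smul_apply, smul_eq_mul]; ring
      rw [this]; exact Submodule.smul_mem _ _ ih
  | zero =>
    have : (fun x => (0 : Torus3 → ℝ) x * g x) = (0 : Torus3 → ℝ) := by
      funext x; simp
    rw [this]; exact Submodule.zero_mem _
  | add f₁ f₂ hf₁ hf₂ ih₁ ih₂ =>
    have : (fun x => (f₁ + f₂) x * g x)
        = (fun x => f₁ x * g x) + fun x => f₂ x * g x := by
      funext x; simp [add_mul]
    rw [this]; exact Submodule.add_mem _ ih₁ ih₂
  | smul a f hfm ih =>
    have : (fun x => (a • f) x * g x) = a • fun x => f x * g x := by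
      funext x; simp [Pi.smul_apply, smul_eq_mul]; ring
    rw [this]; exact Submodule.smul_mem _ _ ih


lemma emode3_zero : emode3 0 = fun _ => (1 : ℝ) := by
  rw [emode3, if_pos isCosMode_zero, cmode3_zero]

lemma Hseq_mono (I : Set (Fin 3 → ℤ)) (k : ℕ) : Hseq I k ≤ Hseq I (k + 1) :=
  fun f hf => Submodule.subset_span (Or.inl hf)

lemma Hseq_le (I : Set (Fin 3 → ℤ)) {k k' : ℕ} (h : k ≤ k') : Hseq I k ≤ Hseq I k' := by
  induction h with
  | refl => exact le_rfl
  | step h ih => exact le_trans ih (Hseq_mono I _)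

lemma mul_mem_Hseq (I : Set (Fin 3 → ℤ)) :
    ∀ (k : ℕ) (g : Torus3 → ℝ), g ∈ Hseq I k → ∀ (j : ℕ) (f : Torus3 → ℝ), f ∈ Hseq I j →
      (fun x => f x * g x) ∈ Hseq I (j + k + 1) := by
  intro k
  induction k with
  | zero =>
    intro g hg j f hf
    exact Submodule.subset_span (Or.inr ⟨f, hf, g, hg, rfl⟩)
  | succ k ih =>
    intro g hg j f hf
    induction hg using Submodule.span_induction with
    | mem g hgmem =>
      rcases hgmem with hg1 | ⟨ζ, hζ, ξ, hξ, rfl⟩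
      · exact Hseq_le I (by omega) (ih g hg1 j f hf)
      · have h1 := ih ζ hζ j f hf
        have : (fun x => f x * (fun y => ζ y * ξ y) x)
            = fun x => (fun y => f y * ζ y) x * ξ x := by funext x; ring
        rw [this]
        exact Submodule.subset_span (Or.inr ⟨_, h1, ξ, hξ, rfl⟩)
    | zero =>
      have : (fun x => f x * (0 : Torus3 → ℝ) x) = (0 : Torus3 → ℝ) := by funext x; simp
      rw [this]; exact Submodule.zero_mem _
    | add g₁ g₂ hg₁ hg₂ ih₁ ih₂ =>
      have : (fun x => f x * (g₁ + g₂) x)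
          = (fun x => f x * g₁ x) + fun x => f x * g₂ x := by funext x; simp [mul_add]
      rw [this]; exact Submodule.add_mem _ ih₁ ih₂
    | smul a g hgm ihg =>
      have : (fun x => f x * (a • g) x) = a • fun x => f x * g x := by
        funext x; simp [Pi.smul_apply, smul_eq_mul]; ring
      rw [this]; exact Submodule.smul_mem _ _ ihg

lemma Hseq_le_spanG {I : Set (Fin 3 → ℤ)} {G : AddSubgroup (Fin 3 → ℤ)}
    (hIG : I ⊆ (G : Set (Fin 3 → ℤ))) (k : ℕ) :
    Hseq I k ≤ Submodule.span ℝ (emode3 '' (G : Set (Fin 3 → ℤ))) := by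
  induction k with
  | zero => exact Submodule.span_mono (Set.image_mono hIG)
  | succ k ih =>
    rw [Hseq, Submodule.span_le]
    rintro f (hf | ⟨ζ, hζ, ξ, hξ, rfl⟩)
    · exact ih hf
    · exact span_mul_mem (ih hζ) (Submodule.span_mono (Set.image_mono hIG) hξ)

end SpanLemmas

section Integrals
open Complex

lemma integral_fourier_circle (n : ℤ) :
    ∫ x : AddCircle (2 * Real.pi), fourier n x = if n = 0 then (2 * Real.pi : ℂ) else 0 := by
  rw [← AddCircle.intervalIntegral_preimage (2 * Real.pi) 0 (fun z => fourier n z)]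
  by_cases hn : n = 0
  · subst hn
    simp only [fourier_zero, if_pos]
    rw [intervalIntegral.integral_const]
    simp
  · rw [if_neg hn]
    have hrw : ∀ x : ℝ, (fourier n (x : AddCircle (2 * Real.pi)) : ℂ)
        = Complex.exp (((n : ℂ) * Complex.I) * x) := by
      intro x
      rw [fourier_coe_apply]
      congr 1
      have hπ : (Real.pi : ℂ) ≠ 0 := by
        simpa using Real.pi_ne_zero
      push_cast
      field_simp
    simp only [hrw]
    rw [integral_exp_mul_complex (by simp [hn, Complex.I_ne_zero])]
    have h1 : (n : ℂ) * Complex.I * (((0 + 2 * Real.pi : ℝ)) : ℂ) = n * (2 * Real.pi * Complex.I) := by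
      push_cast; ring
    have h2 : (n : ℂ) * Complex.I * (((0:ℝ)) : ℂ) = 0 := by push_cast; ring
    rw [h1, h2, Complex.exp_int_mul_two_pi_mul_I, Complex.exp_zero, sub_self, zero_div]

lemma integral_Fm (l : Fin 3 → ℤ) :
    ∫ x : Torus3, Fm l x = if l = 0 then ((2 * Real.pi : ℂ)^3) else 0 := by
  have : ∫ x : Torus3, Fm l x = ∏ i, ∫ x : AddCircle (2 * Real.pi), fourier (l i) x :=
    MeasureTheory.integral_fintype_prod_eq_prod (ι := Fin 3) (fun i x => fourier (l i) x)
  rw [this]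
  by_cases hl : l = 0
  · subst hl
    simp only [Pi.zero_apply, integral_fourier_circle, if_pos rfl]
    rw [Finset.prod_const]
    simp
  · rw [if_neg hl]
    rw [← ne_eq, ne_zero_iff] at hl
    have : ∃ i, l i ≠ 0 := by
      by_contra hc
      push_neg at hc
      exact hl ⟨hc 0, hc 1, hc 2⟩
    obtain ⟨i, hi⟩ := this
    apply Finset.prod_eq_zero (Finset.mem_univ i)
    rw [integral_fourier_circle, if_neg hi]

lemma integrable_Fm (l : Fin 3 → ℤ) : Integrable (Fm l) (volume : Measure Torus3) :=
  (continuous_Fm l).integrable_of_hasCompactSupport (HasCompactSupport.of_compactSpace _)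

lemma integral_cmode3 (l : Fin 3 → ℤ) :
    ∫ x : Torus3, cmode3 l x = if l = 0 then ((2 * Real.pi)^3) else 0 := by
  have h := integral_re (integrable_Fm l)
  simp only [RCLike.re_to_complex] at h
  simp only [← cmode3_eq] at h
  have hc : ((2 * (Real.pi:ℂ)) ^ 3) = (((2 * Real.pi) ^ 3 : ℝ) : ℂ) := by push_cast; ring
  rw [h, integral_Fm]
  split
  · rw [hc, Complex.ofReal_re]
  · simp

lemma integral_smode3 (l : Fin 3 → ℤ) : ∫ x : Torus3, smode3 l x = 0 := by
  have h := integral_im (integrable_Fm l)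
  simp only [RCLike.im_to_complex] at h
  simp only [← smode3_eq] at h
  have hc : ((2 * (Real.pi:ℂ)) ^ 3) = (((2 * Real.pi) ^ 3 : ℝ) : ℂ) := by push_cast; ring
  rw [h, integral_Fm]
  split
  · rw [hc, Complex.ofReal_im]
  · simp


lemma integrable_cmode3 (l : Fin 3 → ℤ) : Integrable (cmode3 l) (volume : Measure Torus3) :=
  (continuous_cmode3 l).integrable_of_hasCompactSupport (HasCompactSupport.of_compactSpace _)
lemma integrable_smode3 (l : Fin 3 → ℤ) : Integrable (smode3 l) (volume : Measure Torus3) :=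
  (continuous_smode3 l).integrable_of_hasCompactSupport (HasCompactSupport.of_compactSpace _)

lemma int_cc (n m : Fin 3 → ℤ) : ∫ x : Torus3, cmode3 n x * cmode3 m x
    = (1/2) * (∫ x : Torus3, cmode3 (n + m) x) + (1/2) * ∫ x : Torus3, cmode3 (n - m) x := by
  rw [c_mul_c n m]
  show ∫ x : Torus3, ((1/2 : ℝ) * cmode3 (n + m) x + (1/2 : ℝ) * cmode3 (n - m) x) = _
  rw [integral_add ((integrable_cmode3 _).const_mul _) ((integrable_cmode3 _).const_mul _),
    MeasureTheory.integral_const_mul, MeasureTheory.integral_const_mul]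

lemma int_ss (n m : Fin 3 → ℤ) : ∫ x : Torus3, smode3 n x * smode3 m x
    = (1/2) * (∫ x : Torus3, cmode3 (n - m) x) - (1/2) * ∫ x : Torus3, cmode3 (n + m) x := by
  rw [s_mul_s n m]
  show ∫ x : Torus3, ((1/2 : ℝ) * cmode3 (n - m) x - (1/2 : ℝ) * cmode3 (n + m) x) = _
  rw [integral_sub ((integrable_cmode3 _).const_mul _) ((integrable_cmode3 _).const_mul _),
    MeasureTheory.integral_const_mul, MeasureTheory.integral_const_mul]

lemma int_cs (n m : Fin 3 → ℤ) : ∫ x : Torus3, cmode3 n x * smode3 m x = 0 := by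
  rw [c_mul_s n m]
  show ∫ x : Torus3, ((1/2 : ℝ) * smode3 (n + m) x - (1/2 : ℝ) * smode3 (n - m) x) = 0
  rw [integral_sub ((integrable_smode3 _).const_mul _) ((integrable_smode3 _).const_mul _),
    MeasureTheory.integral_const_mul, MeasureTheory.integral_const_mul, integral_smode3, integral_smode3]
  ring

lemma int_sc (n m : Fin 3 → ℤ) : ∫ x : Torus3, smode3 n x * cmode3 m x = 0 := by
  rw [s_mul_c n m]
  show ∫ x : Torus3, ((1/2 : ℝ) * smode3 (n + m) x + (1/2 : ℝ) * smode3 (n - m) x) = 0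
  rw [integral_add ((integrable_smode3 _).const_mul _) ((integrable_smode3 _).const_mul _),
    MeasureTheory.integral_const_mul, MeasureTheory.integral_const_mul, integral_smode3, integral_smode3]
  ring

lemma integral_emul {n m : Fin 3 → ℤ} (h : n ≠ m) :
    ∫ x : Torus3, emode3 n x * emode3 m x = 0 := by
  have hsub : n - m ≠ 0 := sub_ne_zero.mpr h
  unfold emode3
  split <;> split
  case isTrue.isTrue hn hm =>
    have hadd : n + m ≠ 0 := by
      intro hc
      have hmn : m = -n := by linear_combination hc - n
      rw [hmn] at hm
      have : n = 0 := isCosMode_both hn hm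
      exact h (by rw [this, hmn, this, neg_zero])
    rw [int_cc, integral_cmode3, integral_cmode3, if_neg hadd, if_neg hsub]
    ring
  case isTrue.isFalse => exact int_cs n m
  case isFalse.isTrue => exact int_sc n m
  case isFalse.isFalse hn hm =>
    have hadd : n + m ≠ 0 := by
      intro hc
      have hmn : m = -n := by linear_combination hc - n
      rw [hmn] at hm
      exact (isCosMode_or n).elim hn hm
    rw [int_ss, integral_cmode3, integral_cmode3, if_neg hadd, if_neg hsub]
    ring

lemma integral_esq {m : Fin 3 → ℤ} (hm : m ≠ 0) :
    ∫ x : Torus3, emode3 m x * emode3 m x = (2 * Real.pi)^3 / 2 := by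
  have hadd : m + m ≠ 0 := by
    intro hc
    apply hm
    funext i
    have := congrFun hc i
    simp only [Pi.add_apply, Pi.zero_apply] at this ⊢
    omega
  have hzz : m - m = 0 := sub_self m
  unfold emode3
  split
  · rw [int_cc, hzz, integral_cmode3, integral_cmode3, if_neg hadd, if_pos rfl]
    ring
  · rw [int_ss, hzz, integral_cmode3, integral_cmode3, if_neg hadd, if_pos rfl]
    ring

end Integrals

section Main
open scoped RealInnerProductSpace

lemma ortho_span {G : AddSubgroup (Fin 3 → ℤ)} {m : Fin 3 → ℤ} (hm : m ∉ G) :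
    ∀ f ∈ Submodule.span ℝ (emode3 '' (G : Set (Fin 3 → ℤ))),
      Continuous f ∧ ∫ x : Torus3, emode3 m x * f x = 0 := by
  intro f hf
  induction hf using Submodule.span_induction with
  | mem f hfmem =>
    obtain ⟨n, hn, rfl⟩ := hfmem
    refine ⟨continuous_emode3 n, integral_emul ?_⟩
    intro hc
    exact hm (hc ▸ hn)
  | zero =>
    refine ⟨continuous_const, ?_⟩
    simp
  | add f g hf hg ihf ihg =>
    refine ⟨ihf.1.add ihg.1, ?_⟩
    have : ∀ x : Torus3, emode3 m x * (f + g) x = emode3 m x * f x + emode3 m x * g x := by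
      intro x; simp [mul_add]
    rw [MeasureTheory.integral_congr_ae (Filter.Eventually.of_forall this),
      integral_add (f := fun x => emode3 m x * f x) (g := fun x => emode3 m x * g x)
        (((continuous_emode3 m).mul ihf.1).integrable_of_hasCompactSupport
          (HasCompactSupport.of_compactSpace _))
        (((continuous_emode3 m).mul ihg.1).integrable_of_hasCompactSupport
          (HasCompactSupport.of_compactSpace _)),
      ihf.2, ihg.2, add_zero]
  | smul a f hf ihf =>
    refine ⟨ihf.1.const_smul a, ?_⟩
    have : ∀ x : Torus3, emode3 m x * (a • f) x = a * (emode3 m x * f x) := by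
      intro x; simp [Pi.smul_apply, smul_eq_mul]; ring
    rw [MeasureTheory.integral_congr_ae (Filter.Eventually.of_forall this),
      MeasureTheory.integral_const_mul, ihf.2, mul_zero]

theorem not_dense_of_not_gen (I : Finset (Fin 3 → ℤ))
    (h0 : (0 : Fin 3 → ℤ) ∈ I)
    (hne : AddSubgroup.closure (I : Set (Fin 3 → ℤ)) ≠ ⊤) :
    ¬ Dense {g : Lp ℝ 2 (volume : Measure Torus3) |
        ∃ k : ℕ, ∃ f ∈ Hseq (I : Set (Fin 3 → ℤ)) k, (g : Torus3 → ℝ) =ᵐ[volume] f} := by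
  intro hd
  set G := AddSubgroup.closure (I : Set (Fin 3 → ℤ)) with hG
  obtain ⟨m, hm⟩ : ∃ m, m ∉ G := by
    by_contra hc
    push_neg at hc
    exact hne (AddSubgroup.eq_top_iff' G |>.mpr hc)
  have hm0 : m ≠ 0 := fun hc => hm (hc ▸ G.zero_mem)
  set S := {g : Lp ℝ 2 (volume : Measure Torus3) |
      ∃ k : ℕ, ∃ f ∈ Hseq (I : Set (Fin 3 → ℤ)) k, (g : Torus3 → ℝ) =ᵐ[volume] f} with hS
  set cm : C(Torus3, ℝ) := ⟨emode3 m, continuous_emode3 m⟩ with hcm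
  set E : Lp ℝ 2 (volume : Measure Torus3) := ContinuousMap.toLp 2 volume ℝ cm with hE
  have hEae : (E : Torus3 → ℝ) =ᵐ[volume] emode3 m := ContinuousMap.coeFn_toLp (𝕜 := ℝ) (p := 2) volume cm
  -- the functional
  have hker : ∀ g ∈ S, ⟪E, g⟫ = 0 := by
    intro g hg
    obtain ⟨k, f, hfk, hgf⟩ := hg
    have hfspan : f ∈ Submodule.span ℝ (emode3 '' (G : Set (Fin 3 → ℤ))) :=
      Hseq_le_spanG AddSubgroup.subset_closure k hfk
    have h2 := (ortho_span hm f hfspan).2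
    rw [MeasureTheory.L2.inner_def]
    have hae : (fun x => (inner ℝ (E x) (g x) : ℝ)) =ᵐ[volume] fun x => emode3 m x * f x := by
      filter_upwards [hEae, hgf] with x h1 h2
      rw [h1, h2]
      simp only [RCLike.inner_apply, starRingEnd_apply, star_trivial]
      ring
    rw [MeasureTheory.integral_congr_ae hae, h2]
  have hEE : ⟪E, E⟫ = (2 * Real.pi)^3 / 2 := by
    rw [MeasureTheory.L2.inner_def]
    have hae : (fun x => (inner ℝ (E x) (E x) : ℝ)) =ᵐ[volume] fun x => emode3 m x * emode3 m x := by
      filter_upwards [hEae] with x h1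
      rw [h1]
      simp only [RCLike.inner_apply, starRingEnd_apply, star_trivial]
    rw [MeasureTheory.integral_congr_ae hae, integral_esq hm0]
  have hclosed : IsClosed {g : Lp ℝ 2 (volume : Measure Torus3) | ⟪E, g⟫ = 0} :=
    isClosed_eq (Continuous.inner continuous_const continuous_id) continuous_const
  have hsub : closure S ⊆ {g : Lp ℝ 2 (volume : Measure Torus3) | ⟪E, g⟫ = 0} :=
    closure_minimal hker hclosed
  have : ⟪E, E⟫ = 0 := hsub (by rw [hd.closure_eq]; trivial)
  rw [hEE] at this
  have hpi : (0:ℝ) < (2 * Real.pi)^3 / 2 := by positivity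
  exact hpi.ne' this


section Forward

/-- continuous versions of the modes -/
def ceC (l : Fin 3 → ℤ) : C(Torus3, ℝ) := ⟨emode3 l, continuous_emode3 l⟩
def ccC (l : Fin 3 → ℤ) : C(Torus3, ℝ) := ⟨cmode3 l, continuous_cmode3 l⟩
def csC (l : Fin 3 → ℤ) : C(Torus3, ℝ) := ⟨smode3 l, continuous_smode3 l⟩

variable (I : Finset (Fin 3 → ℤ))

def Balg : Subalgebra ℝ C(Torus3, ℝ) := Algebra.adjoin ℝ (ceC '' (I : Set (Fin 3 → ℤ)))

lemma cs_mem_B (hsym : ∀ l ∈ I, -l ∈ I) {l : Fin 3 → ℤ} (hl : l ∈ I) :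
    ccC l ∈ Balg I ∧ csC l ∈ Balg I := by
  classical
  have hmem : ceC l ∈ Balg I := Algebra.subset_adjoin ⟨l, hl, rfl⟩
  have hmem' : ceC (-l) ∈ Balg I := Algebra.subset_adjoin ⟨-l, hsym l hl, rfl⟩
  by_cases h0 : l = 0
  · subst h0
    constructor
    · have : ceC 0 = ccC 0 := ContinuousMap.ext fun x => congrFun (if_pos isCosMode_zero) x
      rwa [← this]
    · have : csC 0 = 0 := ContinuousMap.ext fun x => congrFun smode3_zero x
      rw [this]; exact zero_mem _
  by_cases hc : isCosMode l
  · have hnc : ¬ isCosMode (-l) := fun h => h0 (isCosMode_both hc h)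
    constructor
    · have : ceC l = ccC l := ContinuousMap.ext fun x => congrFun (if_pos hc) x
      rwa [← this]
    · have : csC l = - ceC (-l) := by
        apply ContinuousMap.ext
        intro x
        have h1 : emode3 (-l) = smode3 (-l) := if_neg hnc
        show smode3 l x = - emode3 (-l) x
        rw [h1, smode3_neg]
        simp
      rw [this]
      exact neg_mem hmem'
  · have hc' : isCosMode (-l) := (isCosMode_or l).resolve_left hc
    constructor
    · have : ccC l = ceC (-l) := by
        apply ContinuousMap.ext
        intro x
        have h1 : emode3 (-l) = cmode3 (-l) := if_pos hc'
        show cmode3 l x = emode3 (-l) x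
        rw [h1, cmode3_neg]
      rw [this]; exact hmem'
    · have : ceC l = csC l := ContinuousMap.ext fun x => congrFun (if_neg hc) x
      rwa [← this]

lemma complex_decomp (a b c d : ℂ) :
    (a + b * Complex.I) * (c + d * Complex.I)
      = (a * c - b * d) + (a * d + b * c) * Complex.I := by
  linear_combination b * d * Complex.I_sq

/-- every `Fm l` has real and imaginary parts in `Balg I`. -/
lemma Fm_rep (hsym : ∀ l ∈ I, -l ∈ I)
    (hgen : AddSubgroup.closure (I : Set (Fin 3 → ℤ)) = ⊤) (l : Fin 3 → ℤ) :
    ∃ g h : C(Torus3, ℝ), g ∈ Balg I ∧ h ∈ Balg I ∧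
      ∀ x, Fm l x = (g x : ℂ) + (h x : ℂ) * Complex.I := by
  have hl : l ∈ AddSubgroup.closure (I : Set (Fin 3 → ℤ)) := by rw [hgen]; trivial
  induction hl using AddSubgroup.closure_induction with
  | mem r hr =>
    refine ⟨ccC r, csC r, (cs_mem_B I hsym hr).1, (cs_mem_B I hsym hr).2, fun x => ?_⟩
    rw [show ((ccC r) x : ℂ) = ((Fm r x).re : ℂ) from rfl,
      show ((csC r) x : ℂ) = ((Fm r x).im : ℂ) from rfl]
    exact (Complex.re_add_im (Fm r x)).symm
  | zero =>
    refine ⟨1, 0, one_mem _, zero_mem _, fun x => ?_⟩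
    rw [Fm_zero]
    simp
  | add a b _ _ iha ihb =>
    obtain ⟨g, h, hg, hh, hrep⟩ := iha
    obtain ⟨g', h', hg', hh', hrep'⟩ := ihb
    refine ⟨g * g' - h * h', g * h' + h * g',
      sub_mem (mul_mem hg hg') (mul_mem hh hh'),
      add_mem (mul_mem hg hh') (mul_mem hh hg'), fun x => ?_⟩
    rw [Fm_add, hrep x, hrep' x, complex_decomp]
    push_cast [ContinuousMap.sub_apply, ContinuousMap.add_apply, ContinuousMap.mul_apply]
    ring
  | neg a _ iha =>
    obtain ⟨g, h, hg, hh, hrep⟩ := iha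
    refine ⟨g, -h, hg, neg_mem hh, fun x => ?_⟩
    rw [Fm_neg, hrep x]
    push_cast [ContinuousMap.neg_apply]
    simp [Complex.conj_ofReal]

lemma Balg_separates (hsym : ∀ l ∈ I, -l ∈ I)
    (hgen : AddSubgroup.closure (I : Set (Fin 3 → ℤ)) = ⊤) :
    (Balg I).SeparatesPoints := by
  intro x y hxy
  obtain ⟨i, hi⟩ : ∃ i, x i ≠ y i := by
    by_contra hc
    push_neg at hc
    exact hxy (funext hc)
  set l : Fin 3 → ℤ := Pi.single i 1 with hldef
  have hFm : ∀ z : Torus3, Fm l z = fourier 1 (z i) := by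
    intro z
    rw [Fm]
    rw [Finset.prod_eq_single i]
    · rw [hldef, Pi.single_eq_same]
    · intro j _ hj
      rw [hldef, Pi.single_eq_of_ne hj, fourier_zero]
    · intro hmem
      exact absurd (Finset.mem_univ i) hmem
  have hne : Fm l x ≠ Fm l y := by
    rw [hFm, hFm]
    intro hc
    apply hi
    apply AddCircle.injective_toCircle (by positivity : (2 * Real.pi) ≠ 0)
    simp only [fourier_apply, one_smul] at hc
    exact Circle.coe_injective hc
  obtain ⟨g, h, hg, hh, hrep⟩ := Fm_rep I hsym hgen l
  by_cases hgxy : g x = g y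
  · have hhxy : h x ≠ h y := by
      intro hc
      apply hne
      rw [hrep x, hrep y, hgxy, hc]
    exact ⟨_, ⟨h, hh, rfl⟩, hhxy⟩
  · exact ⟨_, ⟨g, hg, rfl⟩, hgxy⟩

lemma Balg_sub_Hseq (h0 : (0 : Fin 3 → ℤ) ∈ I) :
    ∀ f ∈ Balg I, ∃ k, (f : Torus3 → ℝ) ∈ Hseq (I : Set (Fin 3 → ℤ)) k := by
  intro f hf
  induction hf using Algebra.adjoin_induction with
  | mem f hfmem =>
    obtain ⟨l, hl, rfl⟩ := hfmem
    exact ⟨0, Submodule.subset_span ⟨l, hl, rfl⟩⟩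
  | algebraMap r =>
    refine ⟨0, ?_⟩
    have : ((algebraMap ℝ C(Torus3, ℝ)) r : Torus3 → ℝ) = r • emode3 0 := by
      funext x
      rw [emode3_zero]
      simp [Algebra.algebraMap_eq_smul_one]
    rw [this]
    exact Submodule.smul_mem _ _ (Submodule.subset_span ⟨0, h0, rfl⟩)
  | add f g _ _ ihf ihg =>
    obtain ⟨j, hj⟩ := ihf
    obtain ⟨k, hk⟩ := ihg
    refine ⟨max j k, ?_⟩
    have : ((f + g : C(Torus3, ℝ)) : Torus3 → ℝ) = (f : Torus3 → ℝ) + (g : Torus3 → ℝ) := rfl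
    rw [this]
    exact Submodule.add_mem _ (Hseq_le _ (le_max_left j k) hj)
      (Hseq_le _ (le_max_right j k) hk)
  | mul f g _ _ ihf ihg =>
    obtain ⟨j, hj⟩ := ihf
    obtain ⟨k, hk⟩ := ihg
    refine ⟨j + k + 1, ?_⟩
    have : ((f * g : C(Torus3, ℝ)) : Torus3 → ℝ) = fun x => f x * g x := rfl
    rw [this]
    exact mul_mem_Hseq _ k _ hk j _ hj

theorem dense_of_gen (hsym : ∀ l ∈ I, -l ∈ I) (h0 : (0 : Fin 3 → ℤ) ∈ I)
    (hgen : AddSubgroup.closure (I : Set (Fin 3 → ℤ)) = ⊤) :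
    Dense {g : Lp ℝ 2 (volume : Measure Torus3) |
        ∃ k : ℕ, ∃ f ∈ Hseq (I : Set (Fin 3 → ℤ)) k, (g : Torus3 → ℝ) =ᵐ[volume] f} := by
  have hSW := ContinuousMap.subalgebra_topologicalClosure_eq_top_of_separatesPoints
    (Balg I) (Balg_separates I hsym hgen)
  have hBdense : Dense (Balg I : Set C(Torus3, ℝ)) := by
    rw [dense_iff_closure_eq, ← Subalgebra.topologicalClosure_coe, hSW]
    rfl
  have hT : DenseRange (ContinuousMap.toLp (E := ℝ) 2 (volume : Measure Torus3) ℝ) :=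
    ContinuousMap.toLp_denseRange (𝕜 := ℝ) (μ := (volume : Measure Torus3)) (p := 2) (E := ℝ) (by norm_num)
  have himg : Dense ((ContinuousMap.toLp (E := ℝ) 2 (volume : Measure Torus3) ℝ) ''
      (Balg I : Set C(Torus3, ℝ))) :=
    DenseRange.dense_image hT (ContinuousMap.toLp 2 volume ℝ).continuous hBdense
  apply himg.mono
  rintro g ⟨f, hfB, rfl⟩
  obtain ⟨k, hk⟩ := Balg_sub_Hseq I h0 f hfB
  exact ⟨k, f, hk, ContinuousMap.coeFn_toLp (𝕜 := ℝ) (p := 2) volume f⟩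

end Forward
end Main
end Stmt15Aux

/-- For a finite symmetric set `𝓘 ∋ 0`, the union `⋃ₖ 𝓗ₖ` is dense in
`L²(𝕋³)` if `𝓘` generates `ℤ³`, and is not dense if `𝓘` does not generate `ℤ³`. -/
theorem stmt15 (I : Finset (Fin 3 → ℤ))
    (hsym : ∀ l ∈ I, -l ∈ I) (h0 : (0 : Fin 3 → ℤ) ∈ I) :
    (AddSubgroup.closure (I : Set (Fin 3 → ℤ)) = ⊤ →
      Dense {g : Lp ℝ 2 (volume : Measure Torus3) |
        ∃ k : ℕ, ∃ f ∈ Hseq (I : Set (Fin 3 → ℤ)) k, (g : Torus3 → ℝ) =ᵐ[volume] f}) ∧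
    (AddSubgroup.closure (I : Set (Fin 3 → ℤ)) ≠ ⊤ →
      ¬ Dense {g : Lp ℝ 2 (volume : Measure Torus3) |
        ∃ k : ℕ, ∃ f ∈ Hseq (I : Set (Fin 3 → ℤ)) k, (g : Torus3 → ℝ) =ᵐ[volume] f}) := by
  exact ⟨Stmt15Aux.dense_of_gen I hsym h0, fun hne => Stmt15Aux.not_dense_of_not_gen I h0 hne⟩

end
end
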